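/- arXiv:1612.05381 — 2 statements merged into one kernel-verified Lean document; each statement's English description precedes it below -/
import Mathlib

section
/- For a connected graph G with n vertices and m edges, tmc(G) = m + n if and only if G is a complete graph. -/
open SimpleGraph

/-- A walk in a total-colored graph is *total monochromatic* if all of its edges and
internal vertices have the same color. -/
def IsTotalMonoWalk {V : Type*} {G : SimpleGraph V} (ce : Sym2 V → ℕ) (cv : V → ℕ)
    {u v : V} (w : G.Walk u v) : Prop :=
  ∃ c, (∀ e ∈ w.edges, ce e = c) ∧ ∀ x ∈ w.support.tail.dropLast, cv x = c

/-- A total coloring (edge coloring `ce`, vertex coloring `cv`) of `G` is a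
*TMC-coloring* if any two vertices are connected by a total monochromatic path. -/
def IsTMCColoring {V : Type*} (G : SimpleGraph V) (ce : Sym2 V → ℕ) (cv : V → ℕ) : Prop :=
  ∀ u v : V, u ≠ v → ∃ w : G.Walk u v, w.IsPath ∧ IsTotalMonoWalk ce cv w

/-- The number of colors used by a total coloring of `G`:
colors appearing on edges of `G` together with colors appearing on vertices. -/
noncomputable def colorsUsed {V : Type*} (G : SimpleGraph V) (ce : Sym2 V → ℕ) (cv : V → ℕ) : ℕ :=
  (ce '' G.edgeSet ∪ Set.range cv).ncard

/-- The total monochromatic connection number `tmc G`: the maximum number of colors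
used in a TMC-coloring of `G`. -/
noncomputable def tmc {V : Type*} [Fintype V] (G : SimpleGraph V) : ℕ :=
  sSup {k | ∃ ce cv, IsTMCColoring G ce cv ∧ colorsUsed G ce cv = k}

lemma tmcSet_nonempty {V : Type*} [Fintype V] (G : SimpleGraph V) (hG : G.Connected) :
    {k | ∃ ce cv, IsTMCColoring G ce cv ∧ colorsUsed G ce cv = k}.Nonempty := by
  classical
  refine ⟨colorsUsed G (fun _ => 0) (fun _ => 0), fun _ => 0, fun _ => 0, ?_, rfl⟩
  intro u v huv
  obtain ⟨w⟩ := hG.preconnected u v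
  exact ⟨w.toPath.1, w.toPath.2, 0, fun e _ => rfl, fun x _ => rfl⟩

lemma colorsUsed_le {V : Type*} [Fintype V] (G : SimpleGraph V) (ce : Sym2 V → ℕ) (cv : V → ℕ) :
    colorsUsed G ce cv ≤ G.edgeSet.ncard + Fintype.card V := by
  classical
  refine (Set.ncard_union_le _ _).trans (Nat.add_le_add ?_ ?_)
  · exact (Set.ncard_image_le (Set.toFinite _))
  · rw [← Set.image_univ]
    calc (cv '' Set.univ).ncard ≤ (Set.univ : Set V).ncard :=
          Set.ncard_image_le (Set.toFinite _)
      _ = Fintype.card V := by rw [Set.ncard_univ, Nat.card_eq_fintype_card]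

theorem stmt9 {V : Type*} [Fintype V] (G : SimpleGraph V) (hG : G.Connected) :
    tmc G = G.edgeSet.ncard + Fintype.card V ↔ G = ⊤ := by
  classical
  constructor
  · intro h
    by_contra hne
    -- get a nonadjacent pair
    obtain ⟨u, v, huv, hnadj⟩ : ∃ u v, u ≠ v ∧ ¬ G.Adj u v := by
      by_contra hc
      push_neg at hc
      apply hne
      ext a b
      simp only [top_adj]
      exact ⟨fun h => G.ne_of_adj h, fun h => hc a b h⟩
    -- bound every element of the set by ncard - 1 + card
    have hbound : ∀ k ∈ {k | ∃ ce cv, IsTMCColoring G ce cv ∧ colorsUsed G ce cv = k},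
        k ≤ (G.edgeSet.ncard - 1) + Fintype.card V := by
      rintro k ⟨ce, cv, htmc, rfl⟩
      obtain ⟨w, hpath, c, hce, _⟩ := htmc u v huv
      -- w has length ≥ 2
      have hlen : 2 ≤ w.length := by
        rcases Nat.lt_or_ge w.length 2 with hl | hl
        · interval_cases h : w.length
          · exact absurd (SimpleGraph.Walk.eq_of_length_eq_zero h) huv
          · exact absurd (SimpleGraph.Walk.adj_of_length_eq_one h) hnadj
        · exact hl
      have hlen' : 2 ≤ w.edges.length := by rwa [SimpleGraph.Walk.length_edges]
      set e1 := w.edges.get ⟨0, by omega⟩ with he1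
      set e2 := w.edges.get ⟨1, by omega⟩ with he2
      have hne12 : e1 ≠ e2 := by
        intro hq
        have := (List.nodup_iff_injective_get.mp hpath.isTrail.edges_nodup) hq
        simp at this
      have hm1 : e1 ∈ w.edges := List.get_mem _ _
      have hm2 : e2 ∈ w.edges := List.get_mem _ _
      have hE1 : e1 ∈ G.edgeSet := w.edges_subset_edgeSet hm1
      have hE2 : e2 ∈ G.edgeSet := w.edges_subset_edgeSet hm2
      -- image of edgeSet loses at least one color
      have himg : ce '' G.edgeSet = ce '' (G.edgeSet \ {e1}) := by
        apply Set.Subset.antisymm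
        · rintro x ⟨e, he, rfl⟩
          by_cases hx : e = e1
          · subst hx
            exact ⟨e2, ⟨hE2, by simpa using (Ne.symm hne12)⟩, by rw [hce _ hm2, hce _ hm1]⟩
          · exact ⟨e, ⟨he, hx⟩, rfl⟩
        · exact Set.image_mono (Set.diff_subset)
      have h1 : (ce '' G.edgeSet).ncard ≤ G.edgeSet.ncard - 1 := by
        rw [himg, ← Set.ncard_diff_singleton_of_mem hE1]
        exact Set.ncard_image_le (Set.toFinite _)
      refine (Set.ncard_union_le _ _).trans (Nat.add_le_add h1 ?_)
      rw [← Set.image_univ]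
      calc (cv '' Set.univ).ncard ≤ (Set.univ : Set V).ncard :=
            Set.ncard_image_le (Set.toFinite _)
        _ = Fintype.card V := by rw [Set.ncard_univ, Nat.card_eq_fintype_card]
    have hsup : tmc G ≤ (G.edgeSet.ncard - 1) + Fintype.card V :=
      csSup_le (tmcSet_nonempty G hG) hbound
    have hpos : 1 ≤ G.edgeSet.ncard := by
      obtain ⟨w, hpath, _⟩ := (fun X : IsTMCColoring G (fun _ => 0) (fun _ => 0) => X)
        (by intro a b hab
            obtain ⟨w⟩ := hG.preconnected a b
            exact ⟨w.toPath.1, w.toPath.2, 0, fun e _ => rfl, fun x _ => rfl⟩) u v huv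
      have : w.length ≠ 0 := fun h => huv (SimpleGraph.Walk.eq_of_length_eq_zero h)
      have hlen' : 1 ≤ w.edges.length := by rw [SimpleGraph.Walk.length_edges]; omega
      have : w.edges.get ⟨0, by omega⟩ ∈ G.edgeSet :=
        w.edges_subset_edgeSet (List.get_mem _ _)
      have := (Set.ncard_pos (Set.toFinite _)).mpr ⟨_, this⟩
      omega
    omega
  · intro h
    subst h
    -- construct injective colorings with disjoint ranges
    obtain ⟨f, hf⟩ := exists_injective_nat (Sym2 V)
    obtain ⟨g, hg⟩ := exists_injective_nat V
    set ce : Sym2 V → ℕ := fun e => 2 * f e with hce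
    set cv : V → ℕ := fun v => 2 * g v + 1 with hcv
    have htmc : IsTMCColoring (⊤ : SimpleGraph V) ce cv := by
      intro a b hab
      refine ⟨SimpleGraph.Walk.cons (by simpa using hab) SimpleGraph.Walk.nil, by simp [hab], ?_⟩
      exact ⟨ce s(a, b), by simp, by simp⟩
    have hcard : colorsUsed (⊤ : SimpleGraph V) ce cv
        = (⊤ : SimpleGraph V).edgeSet.ncard + Fintype.card V := by
      unfold colorsUsed
      rw [Set.ncard_union_eq ?_ (Set.toFinite _) (Set.toFinite _)]
      · congr 1
        · exact Set.ncard_image_of_injective _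
            (fun a b hab => hf (by have h2 : 2 * f a = 2 * f b := hab; omega))
        · rw [← Set.image_univ]
          rw [Set.ncard_image_of_injective _
            (fun a b hab => hg (by have h2 : 2 * g a + 1 = 2 * g b + 1 := hab; omega))]
          rw [Set.ncard_univ, Nat.card_eq_fintype_card]
      · rw [Set.disjoint_left]
        rintro x ⟨e, _, rfl⟩ ⟨a, ha⟩
        have h2 : 2 * g a + 1 = 2 * f e := ha
        omega
    apply le_antisymm
    · exact csSup_le (tmcSet_nonempty _ hG)
        (by rintro k ⟨ce', cv', _, rfl⟩; exact colorsUsed_le _ _ _)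
    · exact le_csSup ⟨_, by rintro k ⟨ce', cv', _, rfl⟩; exact colorsUsed_le _ _ _⟩
        ⟨ce, cv, htmc, hcard⟩
end

section
/- Let n and p be integers with n/2 < p < n − 2, let t = 2(p+1) − n, and let G = Gₙᵗ be the graph obtained from the complete graph K_n as follows: partition the vertex set into n − p classes V₁,…,V_{n−p} with |V₁| = … = |V_{n−p−1}| = 2 and |V_{n−p}| = t; for each class V_j select a vertex v_j* and delete all edges joining v_j* to the other vertices of V_j. Then tmc(G) = m, where m is the number of edges of G. -/
open SimpleGraph

/- ### Auxiliary results for the upper bound -/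

/-- If `x` and `y` are distinct non-adjacent vertices joined by a total monochromatic
walk, then `x` has a neighbour `a` such that the edge `s(x,a)` has the same color as
the vertex `a`. -/
lemma exists_first_edge {V : Type*} {G : SimpleGraph V} (ce : Sym2 V → ℕ) (cv : V → ℕ)
    {x y : V} (hne : x ≠ y) (hna : ¬ G.Adj x y) (W : G.Walk x y)
    (hm : IsTotalMonoWalk ce cv W) : ∃ a, G.Adj x a ∧ ce s(x, a) = cv a := by
  cases W with
  | nil => exact absurd rfl hne
  | @cons _ b _ h W' =>
    cases W' with
    | nil => exact absurd h hna
    | cons h' W'' =>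
      obtain ⟨c, hce, hcv⟩ := hm
      refine ⟨b, h, ?_⟩
      have h1 : ce s(x, b) = c := by
        apply hce
        simp [SimpleGraph.Walk.edges_cons]
      have h2 : cv b = c := by
        apply hcv
        have hsup : (SimpleGraph.Walk.cons h (SimpleGraph.Walk.cons h' W'')).support
            = x :: b :: (SimpleGraph.Walk.cons h' W'').support.tail := by
          simp [SimpleGraph.Walk.support_cons]
        rw [hsup]
        have hnil : (SimpleGraph.Walk.cons h' W'').support.tail ≠ [] := by
          simp [SimpleGraph.Walk.support_cons, SimpleGraph.Walk.support_ne_nil]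
        simp only [List.tail_cons]
        rw [List.dropLast_cons_of_ne_nil hnil]
        exact List.mem_cons_self
      rw [h1, h2]

/-- Upper bound: a TMC-coloring of a graph in which every vertex has a non-neighbour
uses at most `|E(G)|` colors. -/
lemma tmc_upper {V : Type*} [Fintype V] [Nonempty V] (G : SimpleGraph V)
    (hnon : ∀ v : V, ∃ u, v ≠ u ∧ ¬ G.Adj v u)
    (ce : Sym2 V → ℕ) (cv : V → ℕ) (hTMC : IsTMCColoring G ce cv) :
    colorsUsed G ce cv ≤ G.edgeSet.ncard := by
  classical
  choose u hne hna using hnon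
  have hA : ∀ v : V, ∃ a, G.Adj v a ∧ ce s(v, a) = cv a := by
    intro v
    obtain ⟨W, _, hm⟩ := hTMC v (u v) (hne v)
    exact exists_first_edge ce cv (hne v) (hna v) W hm
  choose A hAadj hAce using hA
  set U : Set ℕ := ce '' G.edgeSet ∪ Set.range cv with hU
  set Φ : ℕ → Sym2 V := fun c =>
    if hc : ∃ v, cv v = c then s(hc.choose, A hc.choose)
    else if hc2 : ∃ e ∈ G.edgeSet, ce e = c then hc2.choose
    else s(Classical.arbitrary V, Classical.arbitrary V) with hΦ
  -- facts about Φ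
  have hΦ1 : ∀ c (hc : ∃ v, cv v = c), Φ c = s(hc.choose, A hc.choose) := by
    intro c hc; simp only [hΦ, dif_pos hc]
  have hΦ2 : ∀ c (hc : ¬ ∃ v, cv v = c) (hc2 : ∃ e ∈ G.edgeSet, ce e = c),
      Φ c = hc2.choose := by
    intro c hc hc2; simp only [hΦ, dif_neg hc, dif_pos hc2]
  have hmem_img : ∀ c ∈ U, ¬ (∃ v, cv v = c) → ∃ e ∈ G.edgeSet, ce e = c := by
    intro c hc hnv
    rcases hc with hc | hc
    · obtain ⟨e, he, hec⟩ := hc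
      exact ⟨e, he, hec⟩
    · obtain ⟨v, hv⟩ := hc
      exact absurd ⟨v, hv⟩ hnv
  have hmaps : ∀ c ∈ U, Φ c ∈ G.edgeSet := by
    intro c hc
    by_cases h1 : ∃ v, cv v = c
    · rw [hΦ1 c h1]
      exact (G.mem_edgeSet).mpr (hAadj _)
    · have h2 := hmem_img c hc h1
      rw [hΦ2 c h1 h2]
      exact h2.choose_spec.1
  have hinj : Set.InjOn Φ U := by
    intro c1 h1 c2 h2 heq
    by_cases k1 : ∃ v, cv v = c1 <;> by_cases k2 : ∃ v, cv v = c2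
    · rw [hΦ1 c1 k1, hΦ1 c2 k2] at heq
      rcases Sym2.eq_iff.mp heq with ⟨hx, _⟩ | ⟨hxa, hax⟩
      · rw [← k1.choose_spec, ← k2.choose_spec, hx]
      · calc c1 = cv k1.choose := k1.choose_spec.symm
          _ = cv (A k2.choose) := by rw [hxa]
          _ = ce s(k2.choose, A k2.choose) := (hAce _).symm
          _ = ce s(k1.choose, A k1.choose) := by rw [heq]
          _ = cv (A k1.choose) := hAce _
          _ = cv k2.choose := by rw [hax]
          _ = c2 := k2.choose_spec
    · exfalso
      have h2e := hmem_img c2 h2 k2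
      rw [hΦ1 c1 k1, hΦ2 c2 k2 h2e] at heq
      apply k2
      refine ⟨A k1.choose, ?_⟩
      have : ce s(k1.choose, A k1.choose) = cv (A k1.choose) := hAce _
      rw [← this, heq]
      exact h2e.choose_spec.2
    · exfalso
      have h1e := hmem_img c1 h1 k1
      rw [hΦ1 c2 k2, hΦ2 c1 k1 h1e] at heq
      apply k1
      refine ⟨A k2.choose, ?_⟩
      have : ce s(k2.choose, A k2.choose) = cv (A k2.choose) := hAce _
      rw [← this, ← heq]
      exact h1e.choose_spec.2
    · have h1e := hmem_img c1 h1 k1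
      have h2e := hmem_img c2 h2 k2
      rw [hΦ2 c1 k1 h1e, hΦ2 c2 k2 h2e] at heq
      calc c1 = ce h1e.choose := h1e.choose_spec.2.symm
        _ = ce h2e.choose := by rw [heq]
        _ = c2 := h2e.choose_spec.2
  have himg : Φ '' U ⊆ G.edgeSet := by
    rintro _ ⟨c, hc, rfl⟩
    exact hmaps c hc
  calc colorsUsed G ce cv = U.ncard := rfl
    _ = (Φ '' U).ncard := (Set.ncard_image_of_injOn hinj).symm
    _ ≤ G.edgeSet.ncard := Set.ncard_le_ncard himg (Set.toFinite _)


open Function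

section constr

attribute [local instance] Classical.propDecidable

variable {V : Type*} {r : ℕ} [NeZero r]

attribute [local instance] Classical.propDecidable

variable {V : Type*} {r : ℕ} [NeZero r]

/-- `e` is a hub edge for class `j`: it joins a member of class `j` to the hub
`vstar (j+1)` of that class. -/
def IsHubEdge (cl : V → Fin r) (vstar : Fin r → V) (e : Sym2 V) (j : Fin r) : Prop :=
  ∃ x, cl x = j ∧ e = s(x, vstar (j + 1))

lemma fin_two_ne_zero (hr : 3 ≤ r) : (1 : Fin r) + 1 ≠ 0 := by
  intro h
  have hv := congrArg Fin.val h
  have hz : ((0 : Fin r) : ℕ) = 0 := rfl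
  rw [Fin.val_add, Fin.val_one' r, hz] at hv
  rw [Nat.mod_eq_of_lt (by omega : 1 < r), Nat.mod_eq_of_lt (by omega : 1 + 1 < r)] at hv
  omega

lemma fin_add_one_ne (hr : 3 ≤ r) (j : Fin r) : j + 1 ≠ j := by
  intro h
  have : (1 : Fin r) = 0 := add_eq_left.mp h
  have hv := congrArg Fin.val this
  have hz : ((0 : Fin r) : ℕ) = 0 := rfl
  rw [Fin.val_one' r, hz] at hv
  rw [Nat.mod_eq_of_lt (by omega : 1 < r)] at hv
  omega

lemma hub_unique {cl : V → Fin r} {vstar : Fin r → V}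
    (hvstar : ∀ j, cl (vstar j) = j) (hr : 3 ≤ r) {e : Sym2 V} {j j' : Fin r}
    (h : IsHubEdge cl vstar e j) (h' : IsHubEdge cl vstar e j') : j = j' := by
  obtain ⟨x, hx, he⟩ := h
  obtain ⟨x', hx', he'⟩ := h'
  rw [he] at he'
  rcases Sym2.eq_iff.mp he' with ⟨h1, h2⟩ | ⟨h1, h2⟩
  · rw [← hx, ← hx', h1]
  · -- x = vstar (j'+1) and vstar (j+1) = x'
    exfalso
    have e1 : j = j' + 1 := by rw [← hx, h1, hvstar]
    have e2 : j' = j + 1 := by rw [← hx', ← h2, hvstar]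
    have : j = j + (1 + 1) := by
      conv_lhs => rw [e1, e2]
      rw [add_assoc]
    exact fin_two_ne_zero hr (left_eq_add.mp this)

noncomputable def ceC (cl : V → Fin r) (vstar : Fin r → V) (εE : Sym2 V → ℕ) :
    Sym2 V → ℕ := fun e =>
  if h : ∃ j, IsHubEdge cl vstar e j then 3 * ((Classical.choose h : Fin r) : ℕ) + 1
  else 3 * εE e

noncomputable def cvC (cl : V → Fin r) (vstar : Fin r → V) (εV : V → ℕ) : V → ℕ := fun v =>
  if v = vstar (cl v) then 3 * ((cl v - 1 : Fin r) : ℕ) + 1 else 3 * εV v + 2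

lemma ceC_hub {cl : V → Fin r} {vstar : Fin r → V} (εE : Sym2 V → ℕ)
    (hvstar : ∀ j, cl (vstar j) = j) (hr : 3 ≤ r) {e : Sym2 V} {j : Fin r}
    (h : IsHubEdge cl vstar e j) : ceC cl vstar εE e = 3 * (j : ℕ) + 1 := by
  have hex : ∃ j, IsHubEdge cl vstar e j := ⟨j, h⟩
  rw [ceC, dif_pos hex]
  have := hub_unique hvstar hr (Classical.choose_spec hex) h
  rw [this]

lemma ceC_nonhub {cl : V → Fin r} {vstar : Fin r → V} (εE : Sym2 V → ℕ)
    {e : Sym2 V} (h : ¬ ∃ j, IsHubEdge cl vstar e j) :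
    ceC cl vstar εE e = 3 * εE e := by
  rw [ceC, dif_neg h]

lemma cvC_star {cl : V → Fin r} {vstar : Fin r → V} (εV : V → ℕ)
    (hvstar : ∀ j, cl (vstar j) = j) (k : Fin r) :
    cvC cl vstar εV (vstar k) = 3 * ((k - 1 : Fin r) : ℕ) + 1 := by
  rw [cvC]
  have h1 : vstar k = vstar (cl (vstar k)) := by rw [hvstar]
  rw [if_pos h1, hvstar]

lemma cvC_nonstar {cl : V → Fin r} {vstar : Fin r → V} (εV : V → ℕ)
    {v : V} (h : v ≠ vstar (cl v)) : cvC cl vstar εV v = 3 * εV v + 2 := by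
  rw [cvC, if_neg h]


lemma constr_TMC (hr : 3 ≤ r)
    (cl : V → Fin r) (vstar : Fin r → V) (hvstar : ∀ j, cl (vstar j) = j)
    (εE : Sym2 V → ℕ) (εV : V → ℕ) (G : SimpleGraph V)
    (hG : ∀ u v : V, G.Adj u v ↔
      u ≠ v ∧ ¬(cl u = cl v ∧ (u = vstar (cl u) ∨ v = vstar (cl u)))) :
    IsTMCColoring G (ceC cl vstar εE) (cvC cl vstar εV) := by
  intro u v hne
  by_cases hadj : G.Adj u v
  · refine ⟨SimpleGraph.Walk.cons hadj SimpleGraph.Walk.nil, ?_, ?_⟩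
    · rw [SimpleGraph.Walk.isPath_def]
      simp [hne]
    · refine ⟨ceC cl vstar εE s(u, v), ?_, ?_⟩
      · intro e he
        simp only [SimpleGraph.Walk.edges_cons, SimpleGraph.Walk.edges_nil,
          List.mem_singleton] at he
        rw [he]
      · intro x hx
        simp only [SimpleGraph.Walk.support_cons, SimpleGraph.Walk.support_nil,
          List.tail_cons, List.dropLast_singleton] at hx
        exact absurd hx (List.not_mem_nil (a := x))
  · have h2 : cl u = cl v ∧ (u = vstar (cl u) ∨ v = vstar (cl u)) := by
      by_contra hcon
      exact hadj ((hG u v).mpr ⟨hne, hcon⟩)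
    have hclv : cl v = cl u := h2.1.symm
    have hclb : cl (vstar (cl u + 1)) = cl u + 1 := hvstar _
    have hjne : cl u + 1 ≠ cl u := fin_add_one_ne hr (cl u)
    have hub : u ≠ vstar (cl u + 1) := by
      intro h
      apply hjne
      rw [← hclb, ← h]
    have hvb : v ≠ vstar (cl u + 1) := by
      intro h
      apply hjne
      rw [← hclb, ← h, hclv]
    have adj1 : G.Adj u (vstar (cl u + 1)) := by
      refine (hG _ _).mpr ⟨hub, ?_⟩
      rintro ⟨hc, -⟩
      rw [hclb] at hc
      exact hjne hc.symm
    have adj2 : G.Adj (vstar (cl u + 1)) v := by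
      refine (hG _ _).mpr ⟨fun h => hvb h.symm, ?_⟩
      rintro ⟨hc, -⟩
      rw [hclb, hclv] at hc
      exact hjne hc
    refine ⟨SimpleGraph.Walk.cons adj1 (SimpleGraph.Walk.cons adj2 SimpleGraph.Walk.nil), ?_, ?_⟩
    · rw [SimpleGraph.Walk.isPath_def]
      simp only [SimpleGraph.Walk.support_cons, SimpleGraph.Walk.support_nil]
      refine List.nodup_cons.mpr ⟨?_, List.nodup_cons.mpr ⟨?_, List.nodup_singleton _⟩⟩
      · intro h
        rcases List.mem_cons.mp h with h | h
        · exact hub h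
        · exact hne (List.mem_singleton.mp h)
      · intro h
        exact hvb (List.mem_singleton.mp h).symm
    · refine ⟨3 * ((cl u : Fin r) : ℕ) + 1, ?_, ?_⟩
      · intro e he
        simp only [SimpleGraph.Walk.edges_cons, SimpleGraph.Walk.edges_nil,
          List.mem_cons, List.mem_singleton, List.not_mem_nil, or_false] at he
        rcases he with rfl | rfl
        · exact ceC_hub εE hvstar hr ⟨u, rfl, rfl⟩
        · rw [Sym2.eq_swap]
          exact ceC_hub εE hvstar hr ⟨v, hclv, rfl⟩
      · intro x hx
        have hsup : (SimpleGraph.Walk.cons adj1 (SimpleGraph.Walk.cons adj2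
            SimpleGraph.Walk.nil)).support.tail.dropLast = [vstar (cl u + 1)] := rfl
        rw [hsup, List.mem_singleton] at hx
        rw [hx, cvC_star εV hvstar (cl u + 1), add_sub_cancel_right]

lemma constr_count [Fintype V] (hr : 3 ≤ r)
    (cl : V → Fin r) (vstar : Fin r → V) (hvstar : ∀ j, cl (vstar j) = j)
    (εE : Sym2 V → ℕ) (εV : V → ℕ) (hεE : Injective εE) (hεV : Injective εV)
    (G : SimpleGraph V)
    (hG : ∀ u v : V, G.Adj u v ↔
      u ≠ v ∧ ¬(cl u = cl v ∧ (u = vstar (cl u) ∨ v = vstar (cl u)))) :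
    colorsUsed G (ceC cl vstar εE) (cvC cl vstar εV) = G.edgeSet.ncard := by
  classical
  set ce := ceC cl vstar εE with hce
  set cv := cvC cl vstar εV with hcv
  have hvinj : Injective vstar := fun a b h => by rw [← hvstar a, h, hvstar b]
  set Θ : V → Sym2 V := fun v => s(v, vstar (cl v + 1)) with hΘdef
  have hΘadj : ∀ v, G.Adj v (vstar (cl v + 1)) := by
    intro v
    have hclb : cl (vstar (cl v + 1)) = cl v + 1 := hvstar _
    have hjne : cl v + 1 ≠ cl v := fin_add_one_ne hr (cl v)
    refine (hG _ _).mpr ⟨?_, ?_⟩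
    · intro h
      apply hjne
      rw [← hclb, ← h]
    · rintro ⟨hc, -⟩
      rw [hclb] at hc
      exact hjne hc.symm
  have hΘinj : Injective Θ := by
    intro a b h
    simp only [hΘdef] at h
    rcases Sym2.eq_iff.mp h with ⟨h1, -⟩ | ⟨h1, h2⟩
    · exact h1
    · exfalso
      have e1 : cl a = cl b + 1 := by rw [h1, hvstar]
      have e2 : cl b = cl a + 1 := by rw [← h2, hvstar]
      have e3 : cl a = cl a + (1 + 1) := by
        conv_lhs => rw [e1, e2]
        rw [add_assoc]
      exact fin_two_ne_zero hr (left_eq_add.mp e3)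
  have hΘhub : ∀ v, IsHubEdge cl vstar (Θ v) (cl v) := fun v => ⟨v, rfl, rfl⟩
  set Hb : Set (Sym2 V) := {e | e ∈ G.edgeSet ∧ ∃ j, IsHubEdge cl vstar e j} with hHbdef
  set Nh : Set (Sym2 V) := {e | e ∈ G.edgeSet ∧ ¬ ∃ j, IsHubEdge cl vstar e j} with hNhdef
  have hHbr : Hb = Set.range Θ := by
    ext e
    constructor
    · rintro ⟨heE, j, x, hx, rfl⟩
      refine ⟨x, ?_⟩
      simp only [hΘdef, hx]
    · rintro ⟨v, rfl⟩
      exact ⟨(G.mem_edgeSet).mpr (hΘadj v), cl v, hΘhub v⟩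
  have hsplit : G.edgeSet = Hb ∪ Nh := by
    ext e
    constructor
    · intro he
      by_cases h : ∃ j, IsHubEdge cl vstar e j
      · exact Or.inl ⟨he, h⟩
      · exact Or.inr ⟨he, h⟩
    · rintro (⟨he, -⟩ | ⟨he, -⟩) <;> exact he
  have hdisj0 : Disjoint Hb Nh := by
    rw [Set.disjoint_left]
    rintro e ⟨-, hj⟩ ⟨-, hnj⟩
    exact hnj hj
  have hHbcard : Hb.ncard = Fintype.card V := by
    rw [hHbr, ← Set.image_univ, Set.ncard_image_of_injective _ hΘinj, Set.ncard_univ,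
      Nat.card_eq_fintype_card]
  have hmsum : G.edgeSet.ncard = Fintype.card V + Nh.ncard := by
    rw [hsplit, Set.ncard_union_eq hdisj0 (Set.toFinite _) (Set.toFinite _), hHbcard]
  set SA : Set ℕ := (fun j : Fin r => 3 * (j : ℕ) + 1) '' Set.univ with hSA
  set SB : Set ℕ := (fun e => 3 * εE e) '' Nh with hSB
  set SC : Set ℕ := (fun v => 3 * εV v + 2) '' {v : V | v ≠ vstar (cl v)} with hSC
  have hunion : ce '' G.edgeSet ∪ Set.range cv = SA ∪ (SB ∪ SC) := by
    ext x
    constructor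
    · rintro (⟨e, he, rfl⟩ | ⟨v, rfl⟩)
      · by_cases h : ∃ j, IsHubEdge cl vstar e j
        · obtain ⟨j, hj⟩ := h
          rw [show ce e = 3 * (j : ℕ) + 1 from ceC_hub εE hvstar hr hj]
          exact Or.inl ⟨j, trivial, rfl⟩
        · rw [show ce e = 3 * εE e from ceC_nonhub εE h]
          exact Or.inr (Or.inl ⟨e, ⟨he, h⟩, rfl⟩)
      · by_cases h : v = vstar (cl v)
        · have hv : cv v = 3 * ((cl v - 1 : Fin r) : ℕ) + 1 := by
            conv_lhs => rw [h]
            exact cvC_star εV hvstar (cl v)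
          rw [hv]
          exact Or.inl ⟨cl v - 1, trivial, rfl⟩
        · rw [show cv v = 3 * εV v + 2 from cvC_nonstar εV h]
          exact Or.inr (Or.inr ⟨v, h, rfl⟩)
    · rintro (⟨j, -, rfl⟩ | ⟨e, ⟨heE, hnh⟩, rfl⟩ | ⟨v, hv, rfl⟩)
      · refine Or.inl ⟨Θ (vstar j), (G.mem_edgeSet).mpr (hΘadj (vstar j)), ?_⟩
        have := ceC_hub εE hvstar hr (hΘhub (vstar j))
        rw [hvstar] at this
        exact this
      · exact Or.inl ⟨e, heE, by simpa using ceC_nonhub εE hnh⟩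
      · exact Or.inr ⟨v, cvC_nonstar εV hv⟩
  have fSA : SA.Finite := Set.finite_univ.image _
  have fSB : SB.Finite := (Set.toFinite Nh).image _
  have fSC : SC.Finite := (Set.toFinite _).image _
  have hd1 : Disjoint SA (SB ∪ SC) := by
    rw [Set.disjoint_left]
    rintro x ⟨j, -, rfl⟩ hx
    rcases hx with ⟨e, -, he⟩ | ⟨v, -, hv⟩
    · simp only at he ⊢
      omega
    · simp only at hv ⊢
      omega
  have hd2 : Disjoint SB SC := by
    rw [Set.disjoint_left]
    rintro x ⟨e, -, rfl⟩ ⟨v, -, hv⟩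
    simp only at hv ⊢
    omega
  have hSAcard : SA.ncard = r := by
    rw [hSA, Set.ncard_image_of_injective _
      (fun a b hab => Fin.val_injective (by omega : (a : ℕ) = (b : ℕ))),
      Set.ncard_univ, Nat.card_eq_fintype_card, Fintype.card_fin]
  have hSBcard : SB.ncard = Nh.ncard := by
    rw [hSB, Set.ncard_image_of_injective _
      (fun a b hab => hεE (by omega : εE a = εE b))]
  have hstar_set : {v : V | v ≠ vstar (cl v)} = (Set.range vstar)ᶜ := by
    ext v
    simp only [Set.mem_setOf_eq, Set.mem_compl_iff, Set.mem_range]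
    constructor
    · rintro h ⟨j, rfl⟩
      exact h (by rw [hvstar])
    · intro h hh
      exact h ⟨cl v, hh.symm⟩
  have hrange : (Set.range vstar).ncard = r := by
    rw [← Set.image_univ, Set.ncard_image_of_injective _ hvinj, Set.ncard_univ,
      Nat.card_eq_fintype_card, Fintype.card_fin]
  have hcompl := Set.ncard_add_ncard_compl (Set.range vstar) (Set.toFinite _) (Set.toFinite _)
  rw [hrange, Nat.card_eq_fintype_card] at hcompl
  have hSCcard : SC.ncard = Fintype.card V - r := by
    rw [hSC, Set.ncard_image_of_injective _
      (fun a b hab => hεV (by omega : εV a = εV b)), hstar_set]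
    omega
  have : colorsUsed G ce cv = SA.ncard + (SB.ncard + SC.ncard) := by
    rw [colorsUsed, hunion, Set.ncard_union_eq hd1 fSA (fSB.union fSC),
      Set.ncard_union_eq hd2 fSB fSC]
  rw [this, hSAcard, hSBcard, hSCcard, hmsum]
  omega


end constr

theorem stmt12 {V : Type*} [Fintype V] (n p t : ℕ)
    (hn : Fintype.card V = n) (hp1 : n < 2 * p) (hp2 : p + 2 < n)
    (ht : t = 2 * (p + 1) - n)
    (cl : V → Fin (n - p)) (vstar : Fin (n - p) → V)
    (hvstar : ∀ j, cl (vstar j) = j)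
    (hsize2 : ∀ j : Fin (n - p), (j : ℕ) < n - p - 1 → {v | cl v = j}.ncard = 2)
    (hsizet : ∀ j : Fin (n - p), (j : ℕ) = n - p - 1 → {v | cl v = j}.ncard = t)
    (G : SimpleGraph V)
    (hG : ∀ u v : V, G.Adj u v ↔
      u ≠ v ∧ ¬(cl u = cl v ∧ (u = vstar (cl u) ∨ v = vstar (cl u)))) :
    tmc G = G.edgeSet.ncard := by
  classical
  have hr : 3 ≤ n - p := by omega
  haveI : NeZero (n - p) := ⟨by omega⟩
  haveI : Nonempty V := by
    rw [← Fintype.card_pos_iff, hn]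
    omega
  obtain ⟨εE, hεE⟩ := (countable_iff_exists_injective (Sym2 V)).mp inferInstance
  obtain ⟨εV, hεV⟩ := (countable_iff_exists_injective V).mp inferInstance
  have hnon : ∀ v : V, ∃ u, v ≠ u ∧ ¬ G.Adj v u := by
    intro v
    by_cases hv : v = vstar (cl v)
    · have hcard : 1 < {w : V | cl w = cl v}.ncard := by
        rcases Nat.lt_or_ge ((cl v : ℕ)) (n - p - 1) with h | h
        · rw [hsize2 (cl v) h]
          omega
        · have hj : ((cl v : ℕ)) = n - p - 1 := by
            have := (cl v).isLt
            omega
          rw [hsizet (cl v) hj]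
          omega
      obtain ⟨a, b, ha, hb, hab⟩ := (Set.one_lt_ncard_iff (Set.toFinite _)).mp hcard
      have hex : ∃ u, cl u = cl v ∧ u ≠ v := by
        by_cases hva : a = v
        · exact ⟨b, hb, fun h => hab (h.trans hva.symm).symm⟩
        · exact ⟨a, ha, hva⟩
      obtain ⟨u, hucl, huv⟩ := hex
      refine ⟨u, fun h => huv h.symm, ?_⟩
      intro hadj
      rcases (hG v u).mp hadj with ⟨-, hcon⟩
      exact hcon ⟨hucl.symm, Or.inl hv⟩
    · refine ⟨vstar (cl v), hv, ?_⟩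
      intro hadj
      rcases (hG v (vstar (cl v))).mp hadj with ⟨-, hcon⟩
      exact hcon ⟨(hvstar (cl v)).symm, Or.inr rfl⟩
  have hTMC := constr_TMC hr cl vstar hvstar εE εV G hG
  have hcount := constr_count hr cl vstar hvstar εE εV hεE hεV G hG
  have hmem : G.edgeSet.ncard ∈
      {k | ∃ ce cv, IsTMCColoring G ce cv ∧ colorsUsed G ce cv = k} :=
    ⟨_, _, hTMC, hcount⟩
  have hbd : ∀ k ∈ {k | ∃ ce cv, IsTMCColoring G ce cv ∧ colorsUsed G ce cv = k},
      k ≤ G.edgeSet.ncard := by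
    rintro k ⟨ce, cv, h1, rfl⟩
    exact tmc_upper G hnon ce cv h1
  show sSup {k | ∃ ce cv, IsTMCColoring G ce cv ∧ colorsUsed G ce cv = k} = G.edgeSet.ncard
  exact IsGreatest.csSup_eq ⟨hmem, fun k hk => hbd k hk⟩
end
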